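/- Let n ≥ 1 be a natural number and let t, q be reals with 0 < t < q ≤ 1/2. Then ((q−t)/q)^{qn} · ((1−q+t)/(1−q))^{(1−q)n} ≤ exp(−2·n·t²), where the powers are real powers. -/

import Mathlib

/-- The key analytic estimate in the sample-quantile concentration lemma of the
DDSketch paper: for `n ≥ 1` and `0 < t < q ≤ 1/2`,
`((q-t)/q)^(qn) · ((1-q+t)/(1-q))^((1-q)n) ≤ exp(-2nt²)` (real powers). -/
theorem chernoff_quantile_estimate
    (n : ℕ) (hn : 1 ≤ n) (t q : ℝ) (ht : 0 < t) (htq : t < q) (hq : q ≤ 1 / 2) :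
    ((q - t) / q) ^ (q * n) * ((1 - q + t) / (1 - q)) ^ ((1 - q) * n) ≤
      Real.exp (-2 * n * t ^ 2) := by
  have hq0 : 0 < q := ht.trans htq
  have hq1 : q < 1 := lt_of_le_of_lt hq (by norm_num)
  have hA : 0 < q - t := sub_pos.mpr htq
  have hB : 0 < 1 - q := sub_pos.mpr hq1
  have hB' : 0 < 1 - q + t := by linarith
  set g : ℝ → ℝ := fun x => q * (Real.log (q - x) - Real.log q)
      + (1 - q) * (Real.log (1 - q + x) - Real.log (1 - q)) + 2 * x ^ 2 with hg
  -- derivative of g on Ioo 0 t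
  have hderiv : ∀ x ∈ Set.Ioo (0:ℝ) t, HasDerivAt g
      (q * (-1 / (q - x)) + (1 - q) * (1 / (1 - q + x)) + 4 * x) x := by
    intro x hx
    obtain ⟨hx0, hxt⟩ := hx
    have hqx : 0 < q - x := by linarith
    have hqx' : 0 < 1 - q + x := by linarith
    have h1 : HasDerivAt (fun y : ℝ => q - y) (-1) x := by
      simpa using (hasDerivAt_id x).const_sub q
    have h2 : HasDerivAt (fun y : ℝ => Real.log (q - y)) (-1 / (q - x)) x :=
      h1.log hqx.ne'
    have h3 : HasDerivAt (fun y : ℝ => 1 - q + y) 1 x := by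
      simpa using (hasDerivAt_id x).const_add (1 - q)
    have h4 : HasDerivAt (fun y : ℝ => Real.log (1 - q + y)) (1 / (1 - q + x)) x :=
      h3.log hqx'.ne'
    have h5 : HasDerivAt (fun y : ℝ => 2 * y ^ 2) (4 * x) x := by
      have := (hasDerivAt_pow 2 x).const_mul (2 : ℝ)
      exact this.congr_deriv (by norm_num; ring)
    have h6 := (((h2.sub_const (Real.log q)).const_mul q).add
      ((h4.sub_const (Real.log (1 - q))).const_mul (1 - q))).add h5
    simpa [hg, Pi.add_def] using h6
  -- g is antitone on [0, t]
  have hcont : ContinuousOn g (Set.Icc 0 t) := by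
    apply ContinuousOn.add
    apply ContinuousOn.add
    · apply ContinuousOn.mul continuousOn_const
      apply ContinuousOn.sub _ continuousOn_const
      apply ContinuousOn.log (by fun_prop)
      intro x hx
      have : x ≤ t := hx.2
      have : 0 < q - x := by linarith
      exact this.ne'
    · apply ContinuousOn.mul continuousOn_const
      apply ContinuousOn.sub _ continuousOn_const
      apply ContinuousOn.log (by fun_prop)
      intro x hx
      have : 0 ≤ x := hx.1
      have : 0 < 1 - q + x := by linarith
      exact this.ne'
    · fun_prop
  have hanti : AntitoneOn g (Set.Icc 0 t) := by
    apply antitoneOn_of_deriv_nonpos (convex_Icc 0 t) hcont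
    · intro x hx
      rw [interior_Icc] at hx
      exact ((hderiv x hx).differentiableAt).differentiableWithinAt
    · intro x hx
      rw [interior_Icc] at hx
      rw [(hderiv x hx).deriv]
      obtain ⟨hx0, hxt⟩ := hx
      have hqx : 0 < q - x := by linarith
      have hqx' : 0 < 1 - q + x := by linarith
      have hprod : (q - x) * (1 - q + x) ≤ 1 / 4 := by nlinarith [sq_nonneg (q - x - 1/2)]
      have key : q * (-1 / (q - x)) + (1 - q) * (1 / (1 - q + x)) =
          -x / ((q - x) * (1 - q + x)) := by
        field_simp
        ring
      rw [key]
      rw [div_add' _ _ _ (by positivity), div_nonpos_iff]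
      right
      constructor
      · nlinarith [mul_le_mul_of_nonneg_left hprod (by linarith : (0:ℝ) ≤ 4 * x)]
      · positivity
  have hgt : g t ≤ 0 := by
    have h0 : g 0 = 0 := by simp [hg]
    have := hanti (Set.left_mem_Icc.mpr ht.le) (Set.right_mem_Icc.mpr ht.le) ht.le
    linarith [this]
  -- now rewrite LHS
  have ha : (0:ℝ) < (q - t) / q := by positivity
  have hb : (0:ℝ) < (1 - q + t) / (1 - q) := by positivity
  rw [Real.rpow_def_of_pos ha, Real.rpow_def_of_pos hb, ← Real.exp_add, Real.exp_le_exp,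
    Real.log_div hA.ne' hq0.ne', Real.log_div hB'.ne' hB.ne']
  have hn0 : (0:ℝ) ≤ n := Nat.cast_nonneg n
  have expand : (Real.log (q - t) - Real.log q) * (q * ↑n) +
      (Real.log (1 - q + t) - Real.log (1 - q)) * ((1 - q) * ↑n) =
      (n : ℝ) * (g t - 2 * t ^ 2) := by
    simp only [hg]
    ring
  rw [expand]
  nlinarith [mul_nonpos_of_nonneg_of_nonpos hn0 hgt]
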